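/- Let 𝒫 be the cutset projection of a connected weighted graph G. If R_eff ∈ ℝ^{n×n} denotes the matrix of effective resistances of G, i.e., (R_eff)_{ij} = (eᵢ−eⱼ)ᵀ L† (eᵢ−eⱼ), then 𝒫 = −(1/2) Bᵀ R_eff B 𝒜. -/

import Mathlib

open Matrix

/-- Uniqueness of the Moore–Penrose pseudoinverse. -/
lemma mp_unique' {n : ℕ} (A X Y : Matrix (Fin n) (Fin n) ℝ)
    (hX1 : A * X * A = A) (hX2 : X * A * X = X)
    (hX3 : (A * X)ᵀ = A * X) (hX4 : (X * A)ᵀ = X * A)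
    (hY1 : A * Y * A = A) (hY2 : Y * A * Y = Y)
    (hY3 : (A * Y)ᵀ = A * Y) (hY4 : (Y * A)ᵀ = Y * A) : X = Y := by
  have hAY : A * Y = A * X := by
    calc A * Y = (A * X * A) * Y := by rw [hX1]
      _ = (A * X) * (A * Y) := by rw [Matrix.mul_assoc]
      _ = (A * X)ᵀ * (A * Y)ᵀ := by rw [hX3, hY3]
      _ = Xᵀ * (A * Y * A)ᵀ := by
            simp [Matrix.transpose_mul, Matrix.mul_assoc]
      _ = Xᵀ * Aᵀ := by rw [hY1]
      _ = (A * X)ᵀ := by rw [Matrix.transpose_mul]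
      _ = A * X := hX3
  have hYA : Y * A = X * A := by
    calc Y * A = Y * (A * X * A) := by rw [hX1]
      _ = (Y * A) * (X * A) := by simp [Matrix.mul_assoc]
      _ = (Y * A)ᵀ * (X * A)ᵀ := by rw [hX4, hY4]
      _ = ((A * Y * A)ᵀ) * Xᵀ := by
            simp [Matrix.transpose_mul, Matrix.mul_assoc]
      _ = Aᵀ * Xᵀ := by rw [hY1]
      _ = (X * A)ᵀ := by rw [Matrix.transpose_mul]
      _ = X * A := hX4
  calc X = X * A * X := hX2.symm
    _ = Y * A * X := by rw [hYA]
    _ = Y * (A * X) := by rw [Matrix.mul_assoc]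
    _ = Y * (A * Y) := by rw [hAY]
    _ = Y * A * Y := by rw [Matrix.mul_assoc]
    _ = Y := hY2

/-- Let `𝒫 = Bᵀ L† B𝒜` be the cutset projection of a connected weighted
graph, and let `R_eff` be the matrix of effective resistances,
`(R_eff)_{ij} = (eᵢ−eⱼ)ᵀ L† (eᵢ−eⱼ)`. Then `𝒫 = −(1/2) Bᵀ R_eff B 𝒜`. -/
theorem cutset_projection_effective_resistance
    (n m : ℕ) (B : Matrix (Fin n) (Fin m) ℝ) (a : Fin m → ℝ)
    (ha : ∀ e, 0 < a e)
    (hconn : ∀ x : Fin n → ℝ, Bᵀ.mulVec x = 0 ↔ ∃ c : ℝ, x = fun _ => c)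
    (L Ldag : Matrix (Fin n) (Fin n) ℝ)
    (hL : L = B * Matrix.diagonal a * Bᵀ)
    (hmp1 : L * Ldag * L = L) (hmp2 : Ldag * L * Ldag = Ldag)
    (hmp3 : (L * Ldag)ᵀ = L * Ldag) (hmp4 : (Ldag * L)ᵀ = Ldag * L)
    (Reff : Matrix (Fin n) (Fin n) ℝ)
    (hReff : ∀ i j, Reff i j =
      dotProduct (Pi.single i 1 - Pi.single j 1)
        (Ldag.mulVec (Pi.single i 1 - Pi.single j 1))) :
    Bᵀ * Ldag * B * Matrix.diagonal a =
      (-(1 / 2 : ℝ)) • (Bᵀ * Reff * B * Matrix.diagonal a) := by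
  -- L is symmetric
  have hLsym : Lᵀ = L := by
    rw [hL]
    simp [Matrix.transpose_mul, Matrix.mul_assoc, Matrix.diagonal_transpose]
  -- Ldag is symmetric, by uniqueness of the Moore–Penrose pseudoinverse
  have hsym : Ldagᵀ = Ldag := by
    refine (mp_unique' L Ldagᵀ Ldag ?_ ?_ ?_ ?_ hmp1 hmp2 hmp3 hmp4)
    · calc L * Ldagᵀ * L = (Lᵀ * Ldag * Lᵀ)ᵀ := by
            simp [Matrix.transpose_mul, Matrix.mul_assoc]
        _ = (L * Ldag * L)ᵀ := by rw [hLsym]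
        _ = Lᵀ := by rw [hmp1]
        _ = L := hLsym
    · calc Ldagᵀ * L * Ldagᵀ = (Ldag * Lᵀ * Ldag)ᵀ := by
            simp [Matrix.transpose_mul, Matrix.mul_assoc]
        _ = (Ldag * L * Ldag)ᵀ := by rw [hLsym]
        _ = Ldagᵀ := by rw [hmp2]
    · calc (L * Ldagᵀ)ᵀ = Ldag * Lᵀ := by simp [Matrix.transpose_mul]
        _ = Ldag * L := by rw [hLsym]
        _ = (Ldag * L)ᵀ := hmp4.symm
        _ = Lᵀ * Ldagᵀ := by rw [Matrix.transpose_mul]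
        _ = L * Ldagᵀ := by rw [hLsym]
    · calc (Ldagᵀ * L)ᵀ = Lᵀ * Ldag := by simp [Matrix.transpose_mul]
        _ = L * Ldag := by rw [hLsym]
        _ = (L * Ldag)ᵀ := hmp3.symm
        _ = Ldagᵀ * Lᵀ := by rw [Matrix.transpose_mul]
        _ = Ldagᵀ * L := by rw [hLsym]
  -- columns of B sum to zero
  have hcol : ∀ e : Fin m, ∑ i, B i e = 0 := by
    intro e
    have h1 : Bᵀ.mulVec (fun _ => (1 : ℝ)) = 0 :=
      (hconn fun _ => 1).mpr ⟨1, rfl⟩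
    have := congrFun h1 e
    simpa [Matrix.mulVec, dotProduct, Matrix.transpose_apply] using this
  -- entrywise expansion of Reff
  have hReff' : Reff = (Matrix.of fun i _ => Ldag i i) +
      (Matrix.of fun _ j => Ldag j j) - Ldag - Ldagᵀ := by
    ext i j
    rw [hReff i j]
    simp only [dotProduct, Matrix.mulVec, Pi.sub_apply,
      Matrix.sub_apply, Matrix.add_apply, Matrix.of_apply, Matrix.transpose_apply,
      Pi.single_apply]
    rw [Finset.sum_congr rfl (fun k _ => by
      rw [Finset.sum_congr rfl (fun l _ => by ring_nf; rfl)])]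
    simp [Finset.sum_sub_distrib, sub_mul, mul_sub, Finset.sum_ite_eq',
      ite_mul, mul_ite]
    ring
  -- the two "diagonal" pieces vanish
  have hC1 : Bᵀ * (Matrix.of fun i _ => Ldag i i : Matrix (Fin n) (Fin n) ℝ) * B = 0 := by
    ext k l
    simp only [Matrix.mul_apply, Matrix.of_apply, Matrix.transpose_apply,
      Matrix.zero_apply]
    calc ∑ j, (∑ i, B i k * Ldag i i) * B j l
        = (∑ i, B i k * Ldag i i) * ∑ j, B j l := by rw [Finset.mul_sum]
      _ = 0 := by rw [hcol l, mul_zero]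
  have hC2 : Bᵀ * (Matrix.of fun _ j => Ldag j j : Matrix (Fin n) (Fin n) ℝ) * B = 0 := by
    ext k l
    simp only [Matrix.mul_apply, Matrix.of_apply, Matrix.transpose_apply,
      Matrix.zero_apply]
    have h0 : ∀ j : Fin n, ∑ i, B i k * Ldag j j = 0 := fun j => by
      rw [← Finset.sum_mul, hcol k, zero_mul]
    simp [h0]
  have hBRB : Bᵀ * Reff * B = -(Bᵀ * Ldag * B + Bᵀ * Ldag * B) := by
    rw [hReff', hsym]
    simp only [Matrix.mul_sub, Matrix.mul_add, Matrix.sub_mul, Matrix.add_mul]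
    rw [show Bᵀ * (Matrix.of fun i _ => Ldag i i : Matrix (Fin n) (Fin n) ℝ) * B = 0 from hC1,
        show Bᵀ * (Matrix.of fun _ j => Ldag j j : Matrix (Fin n) (Fin n) ℝ) * B = 0 from hC2]
    abel
  rw [hBRB]
  rw [Matrix.neg_mul, Matrix.add_mul]
  module
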